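/- Let K be a field, m ≥ 1, let A ∈ K[X]^{m×m} be nonsingular, let s ∈ ℤ^m, and let σ ∈ ℕ satisfy σ > deg det A. Then there exists t = (t_1,…,t_m) ∈ ℕ^m with min_i t_i = 0, max_i t_i ≤ (m−1)σ, and t_1 + ⋯ + t_m ≤ m²σ/2, such that every matrix P ∈ K[X]^{m×m} in s-Popov form that is left-unimodularly equivalent to A is also in t-Popov form. -/

import Mathlib

open Polynomial Matrix

/-- Degree of a polynomial as an element of `WithBot ℤ`, with `degZ 0 = ⊥`. -/
noncomputable def degZ {K : Type*} [Field K] (p : Polynomial K) : WithBot ℤ :=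
  p.degree.map (fun n : ℕ => (n : ℤ))

/-- The `s`-degree of a row vector `p`: `max_j (deg p_j + s_j)`. -/
noncomputable def sdeg {K : Type*} [Field K] {ι : Type*} [Fintype ι]
    (s : ι → ℤ) (p : ι → Polynomial K) : WithBot ℤ :=
  Finset.univ.sup fun j => degZ (p j) + (s j : WithBot ℤ)

/-- `j` is the `s`-pivot index of the row `p`: the largest index at which the
`s`-degree of `p` is attained. -/
def IsPivotIndex {K : Type*} [Field K] {ι : Type*} [Fintype ι] [LinearOrder ι]
    (s : ι → ℤ) (p : ι → Polynomial K) (j : ι) : Prop :=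
  degZ (p j) + (s j : WithBot ℤ) = sdeg s p ∧
    ∀ k, j < k → degZ (p k) + (s k : WithBot ℤ) ≠ sdeg s p

/-- `P` is in `s`-Popov form: it is nonsingular, the `s`-pivot entries are monic and
on the diagonal, and in each column the nonpivot entries have degree less than
the pivot entry. -/
def IsPopov {K : Type*} [Field K] {m : ℕ} (s : Fin m → ℤ)
    (P : Matrix (Fin m) (Fin m) (Polynomial K)) : Prop :=
  P.det ≠ 0 ∧ (∀ i, IsPivotIndex s (P i) i) ∧ (∀ i, (P i i).Monic) ∧
    ∀ i j, i ≠ j → (P i j).degree < (P j j).degree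

/-- `p` is an interpolant for `(E, J)`: `∑ i, (row i of E) ⋅ (p i)(J) = 0`. -/
def IsInterpolant {K : Type*} [Field K] {ι n : Type*} [Fintype ι] [Fintype n] [DecidableEq n]
    (E : Matrix ι n K) (J : Matrix n n K) (p : ι → Polynomial K) : Prop :=
  ∑ i, Matrix.vecMul (E i) (Polynomial.aeval J (p i)) = 0

/-- `P` is an interpolation basis for `(E, J)`: its rows form a basis of the
`K[X]`-module of interpolants for `(E, J)`. -/
def IsInterpolationBasis {K : Type*} [Field K] {ι n : Type*} [Fintype ι] [Fintype n]
    [DecidableEq n] (E : Matrix ι n K) (J : Matrix n n K)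
    (P : Matrix ι ι (Polynomial K)) : Prop :=
  LinearIndependent (Polynomial K) (fun i => P i) ∧
    (Submodule.span (Polynomial K) (Set.range fun i => P i) : Set (ι → Polynomial K))
      = {p | IsInterpolant E J p}

/-- The product `Q ⋅ E`: the matrix over `K` whose `i`-th row is `∑ j, (E j) ⋅ (Q i j)(J)`. -/
noncomputable def polMulMat {K : Type*} [Field K] {κ ι n : Type*} [Fintype κ] [Fintype ι]
    [Fintype n] [DecidableEq n]
    (Q : Matrix κ ι (Polynomial K)) (E : Matrix ι n K) (J : Matrix n n K) : Matrix κ n K :=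
  fun i => ∑ j, Matrix.vecMul (E j) (Polynomial.aeval J (Q i j))

/-- The `s`-leading matrix of `R`: if row `i` has `s`-degree `d`, its `(i,j)` entry is
the coefficient of degree `d - s j` in `R i j` (and `0` if row `i` is zero). -/
noncomputable def leadingMatrix {K : Type*} [Field K] {ι : Type*} [Fintype ι]
    (s : ι → ℤ) (R : Matrix ι ι (Polynomial K)) : Matrix ι ι K := fun i j =>
  WithBot.recBotCoe 0
    (fun d => if 0 ≤ d - s j then (R i j).coeff (d - s j).toNat else 0)
    (sdeg s (R i))

lemma degZ_eq_natDegree {K : Type*} [Field K] {p : Polynomial K} (hp : p ≠ 0) :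
    degZ p = ((p.natDegree : ℤ) : WithBot ℤ) := by
  rw [degZ, Polynomial.degree_eq_natDegree hp, Nat.cast_withBot, WithBot.map_coe]

lemma degZ_zero {K : Type*} [Field K] : degZ (0 : Polynomial K) = ⊥ := by
  simp [degZ]

lemma le_sdeg {K : Type*} [Field K] {ι : Type*} [Fintype ι]
    (s : ι → ℤ) (p : ι → Polynomial K) (j : ι) :
    degZ (p j) + (s j : WithBot ℤ) ≤ sdeg s p := by
  exact Finset.le_sup (f := fun j => degZ (p j) + (s j : WithBot ℤ)) (Finset.mem_univ j)

lemma sdeg_le {K : Type*} [Field K] {ι : Type*} [Fintype ι]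
    (s : ι → ℤ) (p : ι → Polynomial K) {b : WithBot ℤ}
    (h : ∀ j, degZ (p j) + (s j : WithBot ℤ) ≤ b) : sdeg s p ≤ b := by
  exact Finset.sup_le fun j _ => h j

/-- capped cumulative gap shift -/
noncomputable def capShift {m : ℕ} (s : Fin m → ℤ) (σ : ℕ) (i0 i : Fin m) : ℕ :=
  ((Finset.Ico (s i0) (s i)).filter (fun y => ∃ j, s j ≤ y ∧ y < s j + (σ : ℤ))).card

lemma capShift_self {m : ℕ} (s : Fin m → ℤ) (σ : ℕ) (i0 : Fin m) :
    capShift s σ i0 i0 = 0 := by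
  simp [capShift]

lemma capShift_split {m : ℕ} (s : Fin m → ℤ) (σ : ℕ) (i0 : Fin m)
    (hmin : ∀ a, s i0 ≤ s a) {a b : Fin m} (hab : s a ≤ s b) :
    capShift s σ i0 a ≤ capShift s σ i0 b ∧
    (capShift s σ i0 b : ℤ) - capShift s σ i0 a ≤ s b - s a ∧
    min (σ : ℤ) (s b - s a) ≤ (capShift s σ i0 b : ℤ) - capShift s σ i0 a := by
  classical
  set cond : ℤ → Prop := fun y => ∃ j, s j ≤ y ∧ y < s j + (σ : ℤ) with hcond
  set c : ℕ := ((Finset.Ico (s a) (s b)).filter cond).card with hc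
  have hsplit : capShift s σ i0 b = capShift s σ i0 a + c := by
    rw [capShift, capShift, ← Finset.Ico_union_Ico_eq_Ico (hmin a) hab,
      Finset.filter_union, Finset.card_union_of_disjoint]
    exact Finset.disjoint_filter_filter (Finset.Ico_disjoint_Ico_consecutive _ _ _)
  have hc1 : c ≤ (s b - s a).toNat := by
    calc c ≤ (Finset.Ico (s a) (s b)).card := Finset.card_filter_le _ _
    _ = (s b - s a).toNat := Int.card_Ico _ _
  have hc2 : (min (s a + σ) (s b) - s a).toNat ≤ c := by
    rw [← Int.card_Ico]
    apply Finset.card_le_card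
    intro y hy
    rw [Finset.mem_Ico] at hy
    refine Finset.mem_filter.mpr ⟨Finset.mem_Ico.mpr ⟨hy.1, lt_of_lt_of_le hy.2 (min_le_right _ _)⟩,
      ⟨a, hy.1, lt_of_lt_of_le hy.2 (min_le_left _ _)⟩⟩
  refine ⟨by omega, by omega, by omega⟩

lemma capShift_le {m : ℕ} (s : Fin m → ℤ) (σ : ℕ) (i0 : Fin m) (i : Fin m) :
    capShift s σ i0 i ≤ (Finset.univ.filter fun j => s j < s i).card * σ := by
  classical
  have hsub : ((Finset.Ico (s i0) (s i)).filter (fun y => ∃ j, s j ≤ y ∧ y < s j + (σ : ℤ)))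
      ⊆ (Finset.univ.filter fun j => s j < s i).biUnion
        (fun j => Finset.Ico (s j) (s j + (σ : ℤ))) := by
    intro y hy
    rw [Finset.mem_filter, Finset.mem_Ico] at hy
    obtain ⟨⟨hy1, hy2⟩, j, hj1, hj2⟩ := hy
    exact Finset.mem_biUnion.mpr ⟨j, Finset.mem_filter.mpr ⟨Finset.mem_univ _, lt_of_le_of_lt hj1 hy2⟩,
      Finset.mem_Ico.mpr ⟨hj1, hj2⟩⟩
  calc capShift s σ i0 i ≤ _ := Finset.card_le_card hsub
  _ ≤ ∑ j ∈ Finset.univ.filter fun j => s j < s i, (Finset.Ico (s j) (s j + (σ:ℤ))).card :=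
      Finset.card_biUnion_le
  _ = (Finset.univ.filter fun j => s j < s i).card * σ := by
      have : ∀ j : Fin m, (Finset.Ico (s j) (s j + (σ:ℤ))).card = σ := by
        intro j; rw [Int.card_Ico]; omega
      simp [this, Finset.sum_const, mul_comm]

lemma natDegree_diag_le_det {K : Type*} [Field K] {m : ℕ}
    (P : Matrix (Fin m) (Fin m) (Polynomial K))
    (hmon : ∀ i, (P i i).Monic)
    (hcol : ∀ i j, i ≠ j → (P i j).degree < (P j j).degree) (j : Fin m) :
    (P j j).natDegree ≤ P.det.natDegree := by
  classical
  set N := ∑ i, (P i i).natDegree with hN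
  have hne : ∀ i, P i i ≠ 0 := fun i => (hmon i).ne_zero
  have hprod : (∏ i, P i i).Monic := monic_prod_of_monic _ _ fun i _ => hmon i
  have hNdeg : (∏ i, P i i).natDegree = N :=
    Polynomial.natDegree_prod _ _ fun i _ => hne i
  have hone : P.det.coeff N = 1 := by
    rw [Matrix.det_apply, Polynomial.finset_sum_coeff]
    rw [Finset.sum_eq_single (1 : Equiv.Perm (Fin m))]
    · simp only [Equiv.Perm.sign_one, Equiv.Perm.one_apply, one_smul]
      rw [← hNdeg]
      exact hprod.coeff_natDegree
    · intro π _ hπ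
      have hz : (∏ i, P (π i) i).coeff N = 0 := by
        by_cases hz0 : ∃ i, P (π i) i = 0
        · obtain ⟨i, hi⟩ := hz0
          have h0 : ∏ i, P (π i) i = 0 := Finset.prod_eq_zero (Finset.mem_univ i) hi
          rw [h0, Polynomial.coeff_zero]
        · push_neg at hz0
          apply Polynomial.coeff_eq_zero_of_natDegree_lt
          rw [Polynomial.natDegree_prod _ _ fun i _ => hz0 i]
          obtain ⟨k, hk⟩ : ∃ k, π k ≠ k := by
            by_contra h
            push_neg at h
            exact hπ (Equiv.ext h)
          apply Finset.sum_lt_sum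
          · intro i _
            by_cases hii : π i = i
            · rw [hii]
            · exact (Polynomial.natDegree_lt_natDegree (hz0 i) (hcol (π i) i hii)).le
          · exact ⟨k, Finset.mem_univ k,
              Polynomial.natDegree_lt_natDegree (hz0 k) (hcol (π k) k hk)⟩
      rw [Polynomial.coeff_smul, hz, smul_zero]
    · simp
  have h1 : N ≤ P.det.natDegree :=
    Polynomial.le_natDegree_of_ne_zero (by rw [hone]; exact one_ne_zero)
  exact le_trans (Finset.single_le_sum (f := fun i => (P i i).natDegree)
    (fun i _ => Nat.zero_le _) (Finset.mem_univ j)) h1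


/-- reducing the entries of the shift. For nonsingular `A` and
`σ > deg det A`, there is a shift `t ∈ ℕ^m` with `min t = 0`, `max t ≤ (m-1)σ`, and
`∑ t ≤ m²σ/2`, such that any `s`-Popov form left-unimodularly equivalent to `A` is
also in `t`-Popov form. -/
theorem reduce_shift_entries {K : Type*} [Field K] {m : ℕ} (hm : 1 ≤ m)
    (A : Matrix (Fin m) (Fin m) (Polynomial K)) (hA : A.det ≠ 0)
    (s : Fin m → ℤ) (σ : ℕ) (hσ : (A.det).natDegree < σ) :
    ∃ t : Fin m → ℕ, (∃ i, t i = 0) ∧ (∀ i, t i ≤ (m - 1) * σ) ∧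
      2 * ∑ i, t i ≤ m ^ 2 * σ ∧
      ∀ P U : Matrix (Fin m) (Fin m) (Polynomial K),
        (∃ c : K, c ≠ 0 ∧ U.det = Polynomial.C c) → P = U * A → IsPopov s P →
          IsPopov (fun i => (t i : ℤ)) P := by
  classical
  have hne : Nonempty (Fin m) := ⟨⟨0, hm⟩⟩
  obtain ⟨i0, -, hi0⟩ := Finset.exists_min_image Finset.univ s Finset.univ_nonempty
  have hmin : ∀ a, s i0 ≤ s a := fun a => hi0 a (Finset.mem_univ a)
  refine ⟨capShift s σ i0, ⟨i0, capShift_self s σ i0⟩, ?_, ?_, ?_⟩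
  · intro i
    have h1 := capShift_le s σ i0 i
    have h2 : (Finset.univ.filter fun j => s j < s i).card ≤ m - 1 := by
      have hsub : (Finset.univ.filter fun j => s j < s i) ⊆ Finset.univ.erase i := by
        intro j hj
        rw [Finset.mem_filter] at hj
        exact Finset.mem_erase.mpr ⟨fun h => absurd (h ▸ hj.2) (lt_irrefl _), Finset.mem_univ _⟩
      calc _ ≤ (Finset.univ.erase i).card := Finset.card_le_card hsub
      _ = m - 1 := by
          rw [Finset.card_erase_of_mem (Finset.mem_univ i), Finset.card_univ, Fintype.card_fin]
    calc capShift s σ i0 i ≤ _ := h1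
    _ ≤ (m - 1) * σ := Nat.mul_le_mul_right σ h2
  · set F := Finset.univ.filter (fun p : Fin m × Fin m => s p.2 < s p.1) with hF
    have hsum : ∑ i, capShift s σ i0 i ≤ F.card * σ := by
      calc ∑ i, capShift s σ i0 i
          ≤ ∑ i, (Finset.univ.filter fun j => s j < s i).card * σ :=
          Finset.sum_le_sum fun i _ => capShift_le s σ i0 i
      _ = (∑ i, (Finset.univ.filter fun j => s j < s i).card) * σ := by rw [Finset.sum_mul]
      _ = F.card * σ := by
          congr 1
          rw [hF, Finset.card_filter, Fintype.sum_prod_type]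
          exact Finset.sum_congr rfl fun i _ =>
            Finset.card_filter (fun j => s j < s i) Finset.univ
    have h2F : 2 * F.card ≤ m * m := by
      have hinj : (F.image Prod.swap).card = F.card :=
        Finset.card_image_of_injective _ Prod.swap_injective
      have hdisj : Disjoint F (F.image Prod.swap) := by
        rw [Finset.disjoint_left]
        intro p hp hp2
        rw [hF, Finset.mem_filter] at hp
        obtain ⟨q, hq, hqp⟩ := Finset.mem_image.mp hp2
        rw [hF, Finset.mem_filter] at hq
        rw [← hqp] at hp
        exact absurd hq.2 (not_lt.mpr hp.2.le)
      calc 2 * F.card = F.card + (F.image Prod.swap).card := by omega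
      _ = (F ∪ F.image Prod.swap).card := (Finset.card_union_of_disjoint hdisj).symm
      _ ≤ (Finset.univ : Finset (Fin m × Fin m)).card :=
          Finset.card_le_card (Finset.subset_univ _)
      _ = m * m := by rw [Finset.card_univ, Fintype.card_prod, Fintype.card_fin]
    calc 2 * ∑ i, capShift s σ i0 i ≤ 2 * (F.card * σ) := by omega
    _ = (2 * F.card) * σ := by ring
    _ ≤ (m * m) * σ := Nat.mul_le_mul_right σ h2F
    _ = m ^ 2 * σ := by ring
  · intro P U hU hPU hpop
    obtain ⟨c, hc, hdetU⟩ := hU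
    obtain ⟨-, hpiv, hmon, hcol⟩ := hpop
    have hdne : ∀ i, P i i ≠ 0 := fun i => (hmon i).ne_zero
    have hdetP : P.det = Polynomial.C c * A.det := by rw [hPU, Matrix.det_mul, hdetU]
    have hdetPne : P.det ≠ 0 := by
      rw [hdetP]; exact mul_ne_zero (Polynomial.C_ne_zero.mpr hc) hA
    have hδσ : ∀ j, (P j j).natDegree < σ := by
      intro j
      have h1 : (P j j).natDegree ≤ P.det.natDegree := natDegree_diag_le_det P hmon hcol j
      rw [hdetP, Polynomial.natDegree_C_mul hc] at h1
      omega
    have hSle : ∀ i j, degZ (P i j) + ((s j : ℤ) : WithBot ℤ)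
        ≤ degZ (P i i) + ((s i : ℤ) : WithBot ℤ) := by
      intro i j
      calc degZ (P i j) + ((s j : ℤ) : WithBot ℤ) ≤ sdeg s (P i) := le_sdeg s (P i) j
      _ = _ := (hpiv i).1.symm
    have hSlt : ∀ i k, i < k → degZ (P i k) + ((s k : ℤ) : WithBot ℤ)
        < degZ (P i i) + ((s i : ℤ) : WithBot ℤ) := by
      intro i k hik
      refine lt_of_le_of_ne (hSle i k) fun h => (hpiv i).2 k hik ?_
      rw [h]; exact (hpiv i).1
    have key : ∀ i j, P i j ≠ 0 → j ≠ i →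
        ((P i j).natDegree : ℤ) + s j ≤ ((P i i).natDegree : ℤ) + s i →
        (((P i j).natDegree : ℤ) + (capShift s σ i0 j) ≤ ((P i i).natDegree : ℤ) + (capShift s σ i0 i) ∧
         (((P i j).natDegree : ℤ) + s j < ((P i i).natDegree : ℤ) + s i →
          ((P i j).natDegree : ℤ) + (capShift s σ i0 j) < ((P i i).natDegree : ℤ) + (capShift s σ i0 i))) := by
      intro i j h0 hji hs
      have hd : (P i j).natDegree < (P j j).natDegree :=
        Polynomial.natDegree_lt_natDegree h0 (hcol i j (fun h => hji h.symm))
      have hdσ : ((P i j).natDegree : ℤ) < σ := by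
        have := hδσ j
        omega
      rcases le_total (s j) (s i) with h | h
      · obtain ⟨h1, h2, h3⟩ := capShift_split s σ i0 hmin h
        exact ⟨by omega, by omega⟩
      · obtain ⟨h1, h2, h3⟩ := capShift_split s σ i0 hmin h
        exact ⟨by omega, by omega⟩
    have hTle : ∀ i j, degZ (P i j) + (((capShift s σ i0 j) : ℤ) : WithBot ℤ)
        ≤ degZ (P i i) + (((capShift s σ i0 i) : ℤ) : WithBot ℤ) := by
      intro i j
      by_cases hji : j = i
      · subst hji; exact le_rfl
      by_cases h0 : P i j = 0
      · rw [h0, degZ_zero, WithBot.bot_add]; exact bot_le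
      have hs : ((P i j).natDegree : ℤ) + s j ≤ ((P i i).natDegree : ℤ) + s i := by
        have h := hSle i j
        rw [degZ_eq_natDegree h0, degZ_eq_natDegree (hdne i)] at h
        exact_mod_cast h
      have h := (key i j h0 hji hs).1
      rw [degZ_eq_natDegree h0, degZ_eq_natDegree (hdne i)]
      exact_mod_cast h
    have hTlt : ∀ i k, i < k → degZ (P i k) + (((capShift s σ i0 k) : ℤ) : WithBot ℤ)
        < degZ (P i i) + (((capShift s σ i0 i) : ℤ) : WithBot ℤ) := by
      intro i k hik
      by_cases h0 : P i k = 0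
      · rw [h0, degZ_zero, WithBot.bot_add, degZ_eq_natDegree (hdne i), ← WithBot.coe_add]
        exact WithBot.bot_lt_coe _
      have hs := hSlt i k hik
      rw [degZ_eq_natDegree h0, degZ_eq_natDegree (hdne i)] at hs
      have hs' : ((P i k).natDegree : ℤ) + s k < ((P i i).natDegree : ℤ) + s i := by
        exact_mod_cast hs
      have h := (key i k h0 (Fin.ne_of_gt hik) hs'.le).2 hs'
      rw [degZ_eq_natDegree h0, degZ_eq_natDegree (hdne i)]
      exact_mod_cast h
    refine ⟨hdetPne, fun i => ?_, hmon, hcol⟩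
    have hsup : sdeg (fun i => ((capShift s σ i0 i) : ℤ)) (P i)
        = degZ (P i i) + (((capShift s σ i0 i) : ℤ) : WithBot ℤ) :=
      le_antisymm (sdeg_le _ _ fun j => hTle i j)
        (le_sdeg (fun i => ((capShift s σ i0 i) : ℤ)) (P i) i)
    exact ⟨hsup.symm, fun k hk => by rw [hsup]; exact (hTlt i k hk).ne⟩
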